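/- For N > 2 and k > 1 (with k < N), the clique covering numbers of Johnson graphs satisfy the recursion θ(J(N,k)) ≤ θ(J(N−1,k−1)) + θ(J(N−1,k)). -/

import Mathlib

/-- The Johnson graph `J(N, k)`. -/
def johnson (N k : ℕ) : SimpleGraph {S : Finset (Fin N) // S.card = k} where
  Adj S T := S ≠ T ∧ (S.1 ∩ T.1).card = k - 1
  symm := by
    refine ⟨fun S T h => ?_⟩
    exact ⟨h.1.symm, by rw [Finset.inter_comm]; exact h.2⟩
  loopless := by
    refine ⟨fun S h => ?_⟩
    exact h.1 rfl

/-- The (vertex) clique covering number of a graph. -/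
noncomputable def theta {V : Type*} (G : SimpleGraph V) : ℕ :=
  sInf {n | ∃ 𝒞 : Finset (Set V), 𝒞.card = n ∧ (∀ C ∈ 𝒞, G.IsClique C) ∧
    ∀ v, ∃ C ∈ 𝒞, v ∈ C}

open Classical in
lemma theta_set_nonempty {V : Type*} [Fintype V] (G : SimpleGraph V) :
    {n | ∃ 𝒞 : Finset (Set V), 𝒞.card = n ∧ (∀ C ∈ 𝒞, G.IsClique C) ∧
      ∀ v, ∃ C ∈ 𝒞, v ∈ C}.Nonempty := by
  refine ⟨_, Finset.univ.image (fun v => ({v} : Set V)), rfl, ?_, ?_⟩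
  · intro C hC
    simp only [Finset.mem_image] at hC
    obtain ⟨v, -, rfl⟩ := hC
    exact G.isClique_singleton v
  · intro v
    exact ⟨{v}, Finset.mem_image_of_mem _ (Finset.mem_univ v), rfl⟩

open Classical in
lemma theta_spec {V : Type*} [Fintype V] (G : SimpleGraph V) :
    ∃ 𝒞 : Finset (Set V), 𝒞.card = theta G ∧ (∀ C ∈ 𝒞, G.IsClique C) ∧
      ∀ v, ∃ C ∈ 𝒞, v ∈ C :=
  Nat.sInf_mem (theta_set_nonempty G)

lemma theta_le {V : Type*} (G : SimpleGraph V) (𝒞 : Finset (Set V))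
    (h1 : ∀ C ∈ 𝒞, G.IsClique C) (h2 : ∀ v, ∃ C ∈ 𝒞, v ∈ C) :
    theta G ≤ 𝒞.card :=
  Nat.sInf_le ⟨𝒞, rfl, h1, h2⟩

/-- For `N > 2` and `1 < k < N`,
`θ(J(N, k)) ≤ θ(J(N-1, k-1)) + θ(J(N-1, k))`. -/
theorem theta_johnson_recursion (N k : ℕ) (hN : 2 < N) (hk : 1 < k) (hkN : k < N) :
    theta (johnson N k) ≤ theta (johnson (N - 1) (k - 1)) + theta (johnson (N - 1) k) := by
  classical
  set e : Fin (N - 1) ↪ Fin N := Fin.castLEEmb (Nat.sub_le N 1) with he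
  have hval : ∀ x : Fin (N - 1), (e x).val = x.val := fun x => rfl
  set last : Fin N := ⟨N - 1, by omega⟩ with hlast
  have hlast_not_mem : ∀ S : Finset (Fin (N - 1)), last ∉ S.map e := by
    intro S hS
    simp only [Finset.mem_map] at hS
    obtain ⟨x, -, hx⟩ := hS
    have h1 : x.val < N - 1 := x.2
    have h2 : (e x).val = N - 1 := by rw [hx]
    have h3 : (e x).val = x.val := rfl
    omega
  -- the lift maps
  have u₁card : ∀ S : {S : Finset (Fin (N - 1)) // S.card = k - 1},
      (insert last (S.1.map e)).card = k := by
    intro S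
    rw [Finset.card_insert_of_notMem (hlast_not_mem _), Finset.card_map, S.2]
    omega
  set u₁ : {S : Finset (Fin (N - 1)) // S.card = k - 1} → {S : Finset (Fin N) // S.card = k} :=
    fun S => ⟨insert last (S.1.map e), u₁card S⟩ with hu₁
  set u₂ : {S : Finset (Fin (N - 1)) // S.card = k} → {S : Finset (Fin N) // S.card = k} :=
    fun S => ⟨S.1.map e, by rw [Finset.card_map]; exact S.2⟩ with hu₂
  -- adjacency preservation
  have adj₁ : ∀ S T, (johnson (N - 1) (k - 1)).Adj S T → (johnson N k).Adj (u₁ S) (u₁ T) := by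
    rintro S T ⟨hne, hcard⟩
    constructor
    · intro h
      apply hne
      have h' : insert last (S.1.map e) = insert last (T.1.map e) := congrArg Subtype.val h
      have h2 : S.1.map e = T.1.map e := by
        have := congrArg (fun s => Finset.erase s last) h'
        simpa [Finset.erase_insert_of_ne, Finset.erase_insert (hlast_not_mem _)] using this
      exact Subtype.ext (Finset.map_injective e h2)
    · show ((insert last (S.1.map e)) ∩ (insert last (T.1.map e))).card = k - 1
      have : (insert last (S.1.map e)) ∩ (insert last (T.1.map e)) =
          insert last ((S.1 ∩ T.1).map e) := by
        rw [← Finset.insert_inter_distrib, ← Finset.map_inter]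
      rw [this, Finset.card_insert_of_notMem (hlast_not_mem _), Finset.card_map, hcard]
      omega
  have adj₂ : ∀ S T, (johnson (N - 1) k).Adj S T → (johnson N k).Adj (u₂ S) (u₂ T) := by
    rintro S T ⟨hne, hcard⟩
    constructor
    · intro h
      apply hne
      have h' : S.1.map e = T.1.map e := congrArg Subtype.val h
      exact Subtype.ext (Finset.map_injective e h')
    · show (S.1.map e ∩ T.1.map e).card = k - 1
      rw [← Finset.map_inter, Finset.card_map, hcard]
  -- get optimal covers
  obtain ⟨𝒞₁, h𝒞₁card, h𝒞₁clique, h𝒞₁cover⟩ := theta_spec (johnson (N - 1) (k - 1))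
  obtain ⟨𝒞₂, h𝒞₂card, h𝒞₂clique, h𝒞₂cover⟩ := theta_spec (johnson (N - 1) k)
  set 𝒞 : Finset (Set {S : Finset (Fin N) // S.card = k}) :=
    𝒞₁.image (fun C => u₁ '' C) ∪ 𝒞₂.image (fun C => u₂ '' C) with h𝒞
  have hclique : ∀ C ∈ 𝒞, (johnson N k).IsClique C := by
    intro C hC
    rw [h𝒞, Finset.mem_union] at hC
    rcases hC with hC | hC
    · obtain ⟨D, hD, rfl⟩ := Finset.mem_image.mp hC
      rintro x ⟨S, hS, rfl⟩ y ⟨T, hT, rfl⟩ hne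
      have hST : S ≠ T := fun h => hne (by rw [h])
      exact adj₁ S T (h𝒞₁clique D hD hS hT hST)
    · obtain ⟨D, hD, rfl⟩ := Finset.mem_image.mp hC
      rintro x ⟨S, hS, rfl⟩ y ⟨T, hT, rfl⟩ hne
      have hST : S ≠ T := fun h => hne (by rw [h])
      exact adj₂ S T (h𝒞₂clique D hD hS hT hST)
  have hcover : ∀ v, ∃ C ∈ 𝒞, v ∈ C := by
    intro v
    by_cases hv : last ∈ v.1
    · -- v = u₁ S for some S
      have hmem : ∀ x ∈ v.1.erase last, x.val < N - 1 := by
        intro x hx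
        obtain ⟨hne, -⟩ := Finset.mem_erase.mp hx
        have : x.val ≠ N - 1 := fun h => hne (Fin.ext h)
        omega
      set S : Finset (Fin (N - 1)) := (v.1.erase last).preimage e e.injective.injOn with hS
      have hmap : S.map e = v.1.erase last := by
        ext x
        simp only [Finset.mem_map, hS, Finset.mem_preimage]
        constructor
        · rintro ⟨y, hy, rfl⟩; exact hy
        · intro hx
          exact ⟨⟨x.val, hmem x hx⟩, by rw [show e ⟨x.val, hmem x hx⟩ = x from Fin.ext rfl]; exact hx, Fin.ext rfl⟩
      have hScard : S.card = k - 1 := by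
        have := congrArg Finset.card hmap
        rw [Finset.card_map] at this
        rw [this, Finset.card_erase_of_mem hv, v.2]
      have hu : u₁ ⟨S, hScard⟩ = v := by
        apply Subtype.ext
        show insert last (S.map e) = v.1
        rw [hmap, Finset.insert_erase hv]
      obtain ⟨C, hC, hSC⟩ := h𝒞₁cover ⟨S, hScard⟩
      exact ⟨u₁ '' C, Finset.mem_union_left _ (Finset.mem_image_of_mem _ hC),
        hu ▸ Set.mem_image_of_mem u₁ hSC⟩
    · -- v = u₂ S
      have hmem : ∀ x ∈ v.1, x.val < N - 1 := by
        intro x hx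
        have hxl : x ≠ last := by rintro rfl; exact hv hx
        have : x.val ≠ N - 1 := fun h => hxl (Fin.ext h)
        omega
      set S : Finset (Fin (N - 1)) := v.1.preimage e e.injective.injOn with hS
      have hmap : S.map e = v.1 := by
        ext x
        simp only [Finset.mem_map, hS, Finset.mem_preimage]
        constructor
        · rintro ⟨y, hy, rfl⟩; exact hy
        · intro hx
          exact ⟨⟨x.val, hmem x hx⟩, by rw [show e ⟨x.val, hmem x hx⟩ = x from Fin.ext rfl]; exact hx, Fin.ext rfl⟩
      have hScard : S.card = k := by
        have := congrArg Finset.card hmap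
        rw [Finset.card_map] at this
        rw [this, v.2]
      have hu : u₂ ⟨S, hScard⟩ = v := Subtype.ext hmap
      obtain ⟨C, hC, hSC⟩ := h𝒞₂cover ⟨S, hScard⟩
      exact ⟨u₂ '' C, Finset.mem_union_right _ (Finset.mem_image_of_mem _ hC),
        hu ▸ Set.mem_image_of_mem u₂ hSC⟩
  calc theta (johnson N k) ≤ 𝒞.card := theta_le _ _ hclique hcover
    _ ≤ (𝒞₁.image (fun C => u₁ '' C)).card + (𝒞₂.image (fun C => u₂ '' C)).card :=
        Finset.card_union_le _ _
    _ ≤ 𝒞₁.card + 𝒞₂.card := Nat.add_le_add (Finset.card_image_le) (Finset.card_image_le)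
    _ = _ := by rw [h𝒞₁card, h𝒞₂card]
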